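/- arXiv:2411.13804 — 3 statements merged into one kernel-verified Lean document; each statement's English description precedes it below -/
import Mathlib

section
/- Let μ be a finite Borel measure on ℝ, s ∈ ℝ, and let G_μ(z) = ∫ 1/(z-t) dμ(t) be its Stieltjes transform. If (z_n) is a sequence of complex numbers with Im(z_n) ≠ 0 converging to s non-tangentially (i.e. |Re(z_n) - s| / |Im(z_n)| ≤ M for some M and all n), then (z_n - s) · G_μ(z_n) → μ({s}). -/
open MeasureTheory Filter

/-- Stieltjes transform boundary limit: if `z n → s` non-tangentially, then
`(z n - s) * G_μ(z n) → μ({s})`. -/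
theorem stmt_0 (μ : Measure ℝ) [IsFiniteMeasure μ] (s : ℝ) (M : ℝ)
    (z : ℕ → ℂ) (him : ∀ n, (z n).im ≠ 0)
    (hlim : Tendsto z atTop (nhds (s : ℂ)))
    (hnontang : ∀ n, |(z n).re - s| / |(z n).im| ≤ M) :
    Tendsto (fun n => (z n - (s : ℂ)) * ∫ t, ((z n) - (t : ℂ))⁻¹ ∂μ) atTop
      (nhds (((μ {s}).toReal : ℝ) : ℂ)) := by
  have hM0 : 0 ≤ M := le_trans (div_nonneg (abs_nonneg _) (abs_nonneg _)) (hnontang 0)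
  have hzt : ∀ n, ∀ t : ℝ, z n - (t : ℂ) ≠ 0 := by
    intro n t h
    apply him n
    rw [sub_eq_zero] at h
    rw [h]; simp
  have hzs : ∀ n, z n ≠ (s : ℂ) := fun n h => hzt n s (by rw [h, sub_self])
  have key : Tendsto (fun n => ∫ t, (z n - (s:ℂ)) * ((z n) - (t:ℂ))⁻¹ ∂μ) atTop
      (nhds (∫ t, Set.indicator {s} (fun _ => (1:ℂ)) t ∂μ)) := by
    apply tendsto_integral_of_dominated_convergence (fun _ => M + 1)
    · intro n
      apply Continuous.aestronglyMeasurable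
      apply Continuous.mul continuous_const
      exact Continuous.inv₀ (by continuity) (fun t => hzt n t)
    · exact integrable_const _
    · intro n
      filter_upwards with t
      have him' : (0:ℝ) < |(z n).im| := abs_pos.mpr (him n)
      have h1 : |(z n).re - s| ≤ M * |(z n).im| := by
        have := hnontang n
        calc |(z n).re - s| = |(z n).re - s| / |(z n).im| * |(z n).im| := by
              field_simp
          _ ≤ M * |(z n).im| := by
              apply mul_le_mul_of_nonneg_right this (abs_nonneg _)
      have h2 : ‖z n - s‖ ≤ (M + 1) * |(z n).im| := by
        calc ‖z n - s‖ ≤ |(z n - s).re| + |(z n - s).im| :=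
              Complex.norm_le_abs_re_add_abs_im _
          _ = |(z n).re - s| + |(z n).im| := by simp
          _ ≤ M * |(z n).im| + |(z n).im| := add_le_add_left h1 _
          _ = (M + 1) * |(z n).im| := by ring
      have h3 : |(z n).im| ≤ ‖z n - t‖ := by
        have := Complex.abs_im_le_norm (z n - t)
        simpa using this
      have hb : (0:ℝ) < ‖z n - t‖ := lt_of_lt_of_le him' h3
      rw [norm_mul, norm_inv]
      rw [mul_inv_le_iff₀ hb]
      calc ‖z n - s‖ ≤ (M + 1) * |(z n).im| := h2
        _ ≤ (M + 1) * ‖z n - t‖ := by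
            apply mul_le_mul_of_nonneg_left h3 (by linarith)
    · filter_upwards with t
      by_cases ht : t = s
      · subst ht
        have heq : ∀ n, (z n - (t:ℂ)) * (z n - (t:ℂ))⁻¹ = 1 := fun n =>
          mul_inv_cancel₀ (hzt n t)
        simp only [heq]
        simp only [Set.indicator, Set.mem_singleton_iff, if_pos rfl]
        exact tendsto_const_nhds
      · have hind : Set.indicator {s} (fun _ => (1:ℂ)) t = 0 := by
          simp [Set.indicator, ht]
        rw [hind]
        have h0 : Tendsto (fun n => z n - (s:ℂ)) atTop (nhds 0) := by
          simpa using hlim.sub (tendsto_const_nhds (x := (s:ℂ)))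
        have hne : (s:ℂ) - (t:ℂ) ≠ 0 := by
          rw [sub_ne_zero]
          exact_mod_cast Ne.symm ht
        have h1 : Tendsto (fun n => (z n - (t:ℂ))⁻¹) atTop (nhds (((s:ℂ) - t)⁻¹)) :=
          (hlim.sub tendsto_const_nhds).inv₀ hne
        simpa using h0.mul h1
  have hfun : (fun n => (z n - (s : ℂ)) * ∫ t, ((z n) - (t : ℂ))⁻¹ ∂μ)
      = fun n => ∫ t, (z n - (s:ℂ)) * ((z n) - (t:ℂ))⁻¹ ∂μ := by
    funext n
    rw [integral_const_mul]
  rw [hfun]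
  rw [integral_indicator_const _ (measurableSet_singleton s)] at key
  simpa [Measure.real] using key
end

section
/- Let α ≠ α', β ≠ β' be reals, 𝒜 = α' - α, ℬ = β' - β, and let z ∈ ℂ satisfy Re((z - (α+α')/2 - i(β+β')/2)²) = (𝒜² - ℬ²)/4. Then z = x + iy lies in the rectangle [min(α,α'), max(α,α')] × [min(β,β'), max(β,β')] if and only if |Im((z - (α+α')/2 - i(β+β')/2)²)| ≤ |𝒜ℬ|/2. -/
open Complex

lemma key_aux (A B u v : ℝ) (hA : A ≠ 0) (hB : B ≠ 0)
    (h : u ^ 2 - v ^ 2 = (A ^ 2 - B ^ 2) / 4) :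
    (|u| ≤ |A| / 2 ∧ |v| ≤ |B| / 2) ↔ |2 * u * v| ≤ |A * B| / 2 := by
  have hA2 : (0:ℝ) < A ^ 2 := by positivity
  have hB2 : (0:ℝ) < B ^ 2 := by positivity
  have h1 : |u| ≤ |A| / 2 ↔ u ^ 2 ≤ A ^ 2 / 4 := by
    constructor
    · intro hle
      nlinarith [abs_nonneg u, _root_.sq_abs u, _root_.sq_abs A, abs_nonneg A]
    · intro hle
      nlinarith [abs_nonneg u, _root_.sq_abs u, _root_.sq_abs A, abs_nonneg A]
  have h2 : |v| ≤ |B| / 2 ↔ v ^ 2 ≤ B ^ 2 / 4 := by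
    constructor
    · intro hle
      nlinarith [abs_nonneg v, _root_.sq_abs v, _root_.sq_abs B, abs_nonneg B]
    · intro hle
      nlinarith [abs_nonneg v, _root_.sq_abs v, _root_.sq_abs B, abs_nonneg B]
  have h3 : |2 * u * v| ≤ |A * B| / 2 ↔ (2 * u * v) ^ 2 ≤ (A * B) ^ 2 / 4 := by
    constructor
    · intro hle
      nlinarith [abs_nonneg (2*u*v), _root_.sq_abs (2*u*v), _root_.sq_abs (A*B), abs_nonneg (A*B)]
    · intro hle
      nlinarith [abs_nonneg (2*u*v), _root_.sq_abs (2*u*v), _root_.sq_abs (A*B), abs_nonneg (A*B)]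
  rw [h1, h2, h3]
  constructor
  · rintro ⟨hu, hv⟩
    nlinarith [sq_nonneg u, sq_nonneg v, mul_nonneg (sub_nonneg.2 hu) (sub_nonneg.2 hv)]
  · intro huv
    have hs : u ^ 2 ≤ A ^ 2 / 4 := by
      nlinarith [sq_nonneg u, sq_nonneg v, sq_nonneg (u*v)]
    exact ⟨hs, by nlinarith⟩

/-- For `z` on the hyperbola, `z` lies in the rectangle iff
`|Im((z - center)²)| ≤ |𝒜ℬ|/2`. -/
theorem stmt_4 (α α' β β' : ℝ) (hα : α ≠ α') (hβ : β ≠ β') (z : ℂ)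
    (hH : ((z - ((α + α') / 2 : ℝ) - ((β + β') / 2 : ℝ) * I) ^ 2).re
        = ((α' - α) ^ 2 - (β' - β) ^ 2) / 4) :
    (z.re ∈ Set.Icc (min α α') (max α α') ∧ z.im ∈ Set.Icc (min β β') (max β β'))
    ↔ |((z - ((α + α') / 2 : ℝ) - ((β + β') / 2 : ℝ) * I) ^ 2).im|
        ≤ |(α' - α) * (β' - β)| / 2 := by
  simp only [pow_two, mul_re, mul_im, sub_re, sub_im, ofReal_re, ofReal_im,
    mul_I_re, mul_I_im, I_re, I_im, Set.mem_Icc] at hH ⊢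
  set u := z.re - (α + α') / 2 with hu
  set v := z.im - (β + β') / 2 with hv
  have hH' : u ^ 2 - v ^ 2 = ((α' - α) ^ 2 - (β' - β) ^ 2) / 4 := by
    rw [hu, hv]; rw [hu] at hH; ring_nf; ring_nf at hH; linarith
  have key := key_aux (α' - α) (β' - β) u v (sub_ne_zero.2 (Ne.symm hα))
    (sub_ne_zero.2 (Ne.symm hβ)) hH'
  have hx : (α ⊓ α' ≤ z.re ∧ z.re ≤ α ⊔ α') ↔ |u| ≤ |α' - α| / 2 := by
    rw [hu, abs_le]
    rcases le_total α α' with h | h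
    · rw [min_eq_left h, max_eq_right h, _root_.abs_of_nonneg (by linarith)]
      constructor <;> rintro ⟨h1, h2⟩ <;> constructor <;> linarith
    · rw [min_eq_right h, max_eq_left h, _root_.abs_of_nonpos (by linarith)]
      constructor <;> rintro ⟨h1, h2⟩ <;> constructor <;> linarith
  have hy : (β ⊓ β' ≤ z.im ∧ z.im ≤ β ⊔ β') ↔ |v| ≤ |β' - β| / 2 := by
    rw [hv, abs_le]
    rcases le_total β β' with h | h
    · rw [min_eq_left h, max_eq_right h, _root_.abs_of_nonneg (by linarith)]
      constructor <;> rintro ⟨h1, h2⟩ <;> constructor <;> linarith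
    · rw [min_eq_right h, max_eq_left h, _root_.abs_of_nonpos (by linarith)]
      constructor <;> rintro ⟨h1, h2⟩ <;> constructor <;> linarith
  rw [hx, hy, key]
  congr 2
  · rw [hu, hv]; ring
end

section
/- Let a, b ∈ (0,1) and define f(z) = 1 + (4ab - 2(a+b))z + (a-b)² z² as a polynomial over ℂ. If a ≠ b, then f is quadratic with discriminant 16ab(1-a)(1-b) > 0, and both roots of f are real and lie in the interval [1, ∞). -/
/-- For `a ≠ b` in `(0,1)`, `f(z) = 1 + (4ab - 2(a+b))z + (a-b)²z²` is quadratic,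
its discriminant is `16ab(1-a)(1-b) > 0`, and all its complex roots are real and
lie in `[1, ∞)`. -/
theorem stmt_5 (a b : ℝ) (ha : a ∈ Set.Ioo (0 : ℝ) 1) (hb : b ∈ Set.Ioo (0 : ℝ) 1)
    (hab : a ≠ b) :
    (a - b) ^ 2 ≠ 0
    ∧ (4 * a * b - 2 * (a + b)) ^ 2 - 4 * (a - b) ^ 2
        = 16 * a * b * (1 - a) * (1 - b)
    ∧ 0 < 16 * a * b * (1 - a) * (1 - b)
    ∧ ∀ z : ℂ,
        1 + ((4 * a * b - 2 * (a + b) : ℝ) : ℂ) * z + (((a - b) ^ 2 : ℝ) : ℂ) * z ^ 2 = 0 →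
        z.im = 0 ∧ 1 ≤ z.re := by
  obtain ⟨ha0, ha1⟩ := ha
  obtain ⟨hb0, hb1⟩ := hb
  have habne : a - b ≠ 0 := sub_ne_zero.mpr hab
  set c : ℝ := (a - b) ^ 2 with hc_def
  set B : ℝ := 4 * a * b - 2 * (a + b) with hB_def
  have hc : 0 < c := by positivity
  have hprod : 0 < a * b * ((1 - a) * (1 - b)) := by
    have := mul_pos ha0 hb0
    have := mul_pos (sub_pos.mpr ha1) (sub_pos.mpr hb1)
    positivity
  have hD : 0 < 16 * a * b * (1 - a) * (1 - b) := by nlinarith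
  have hdisc : B ^ 2 - 4 * c = 16 * a * b * (1 - a) * (1 - b) := by
    simp only [hc_def, hB_def]; ring
  set s : ℝ := Real.sqrt (16 * a * b * (1 - a) * (1 - b)) with hs_def
  have hs0 : 0 ≤ s := Real.sqrt_nonneg _
  have hs2 : s ^ 2 = B ^ 2 - 4 * c := by
    rw [hdisc, hs_def, Real.sq_sqrt hD.le]
  have hBc : 0 < -B - 2 * c := by
    simp only [hc_def, hB_def]
    nlinarith [mul_pos ha0 (sub_pos.mpr ha1), mul_pos hb0 (sub_pos.mpr hb1)]
  have hsle : s ≤ -B - 2 * c := by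
    have h1 : 16 * a * b * (1 - a) * (1 - b) ≤ (-B - 2 * c) ^ 2 := by
      simp only [hc_def, hB_def]
      nlinarith [sq_nonneg (a * (1 - a) - b * (1 - b))]
    calc s ≤ Real.sqrt ((-B - 2 * c) ^ 2) := Real.sqrt_le_sqrt h1
    _ = -B - 2 * c := Real.sqrt_sq hBc.le
  set r1 : ℝ := (-B + s) / (2 * c) with hr1_def
  set r2 : ℝ := (-B - s) / (2 * c) with hr2_def
  have hr2ge : 1 ≤ r2 := by
    rw [hr2_def, le_div_iff₀ (by linarith)]
    linarith
  have hr1ge : 1 ≤ r1 := by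
    refine le_trans hr2ge ?_
    rw [hr1_def, hr2_def]
    gcongr
    linarith
  refine ⟨by positivity, by rw [← hdisc], hD, ?_⟩
  intro z hz
  have h2c : ((2 * c : ℝ) : ℂ) ≠ 0 := by
    exact_mod_cast (by linarith : (0:ℝ) < 2 * c).ne'
  have hsC : ((s : ℝ) : ℂ) ^ 2 = ((B : ℝ) : ℂ) ^ 2 - 4 * (c : ℂ) := by
    exact_mod_cast congrArg (fun x : ℝ => (x : ℂ)) hs2
  have hzero : ((2 * (c:ℂ)) * z + B - s) * ((2 * (c:ℂ)) * z + B + s) = 0 := by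
    linear_combination (4 * (c:ℂ)) * hz - hsC
  rcases mul_eq_zero.mp hzero with h | h
  · have hz1 : z = (r1 : ℂ) := by
      have key : ((2 * c : ℝ) : ℂ) * z = ((2 * c : ℝ) : ℂ) * (r1 : ℂ) := by
        rw [hr1_def]
        push_cast
        rw [mul_div_cancel₀ _ (show (2*(c:ℂ)) ≠ 0 by exact_mod_cast h2c)]
        linear_combination h
      exact mul_left_cancel₀ h2c key
    subst hz1
    exact ⟨by simp, by simpa using hr1ge⟩
  · have hz2 : z = (r2 : ℂ) := by
      have key : ((2 * c : ℝ) : ℂ) * z = ((2 * c : ℝ) : ℂ) * (r2 : ℂ) := by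
        rw [hr2_def]
        push_cast
        rw [mul_div_cancel₀ _ (show (2*(c:ℂ)) ≠ 0 by exact_mod_cast h2c)]
        linear_combination h
      exact mul_left_cancel₀ h2c key
    subst hz2
    exact ⟨by simp, by simpa using hr2ge⟩
end
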